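/- Let d₁ = d₂ = 1, g > 0, α = p/q with p ∈ ℤ, q ≥ 1, and ω ∈ [0,1) with (p/q)x₂ + ω ∉ 1/2 + ℤ for all x₂ ∈ ℤ, so that V(x) = δ(x₁) g tan π((p/q)x₂ + ω) is a bounded real potential and H = H₀ + V is a bounded self-adjoint operator on ℓ²(ℤ²;ℂ). Suppose E ∈ ℝ and there exists a function Ψ : ℤ² → ℂ, not identically zero, such that: (a) there is θ ∈ ℝ with Ψ(x₁, x₂ + q) = e^{iθ} Ψ(x₁,x₂) for all (x₁,x₂) ∈ ℤ² (Bloch–Floquet periodicity in the longitudinal direction); (b) ∑_{x₁∈ℤ} max_{0 ≤ x₂ < q} |Ψ(x₁,x₂)|² < ∞; and (c) −(1/2)∑_{|y−x|=1} Ψ(y) + V(x) Ψ(x) = E Ψ(x) pointwise for all x ∈ ℤ². Then E (viewed in ℂ) belongs to the spectrum of H. -/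

import Mathlib

open Complex

/-- The two-dimensional discrete Laplacian part: `(H₀Ψ)(x) = -(1/2) ∑_{|x-y|=1} Ψ(y)`. -/
noncomputable def lap2 (Ψ : ℤ × ℤ → ℂ) (x : ℤ × ℤ) : ℂ :=
  -(1/2) * (Ψ (x.1 + 1, x.2) + Ψ (x.1 - 1, x.2) + Ψ (x.1, x.2 + 1) + Ψ (x.1, x.2 - 1))

/-- The periodic surface Maryland potential `V(x) = δ(x₁) g tan π((p/q)x₂ + ω)`. -/
noncomputable def Vper (g : ℝ) (p : ℤ) (q : ℕ) (ω : ℝ) (x : ℤ × ℤ) : ℝ :=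
  if x.1 = 0 then g * Real.tan (Real.pi * ((p : ℝ) / (q : ℝ) * (x.2 : ℝ) + ω)) else 0

private lemma bloch_zpow {Ψ : ℤ × ℤ → ℂ} {θ : ℝ} {q : ℕ}
    (hb : ∀ x : ℤ × ℤ, Ψ (x.1, x.2 + (q : ℤ)) = Complex.exp ((θ : ℂ) * Complex.I) * Ψ x) :
    ∀ (k : ℤ) (x : ℤ × ℤ),
      Ψ (x.1, x.2 + k * (q : ℤ)) = Complex.exp ((θ : ℂ) * Complex.I) ^ k * Ψ x := by
  intro k
  induction k using Int.induction_on with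
  | zero => intro x; simp
  | succ n ih =>
      intro x
      have h1 : x.2 + ((n : ℤ) + 1) * (q : ℤ) = (x.2 + (n : ℤ) * q) + (q : ℤ) := by ring
      have h2 : Ψ (x.1, (x.2 + (n : ℤ) * q) + (q:ℤ)) =
          Complex.exp ((θ : ℂ) * Complex.I) * Ψ (x.1, x.2 + (n : ℤ) * q) :=
        hb (x.1, x.2 + (n : ℤ) * q)
      rw [h1, h2, ih x, zpow_add_one₀ (Complex.exp_ne_zero _)]
      ring
  | pred n ih =>
      intro x
      have h1 : (x.2 + (-(n : ℤ) - 1) * (q : ℤ)) + (q : ℤ) = x.2 + (-(n : ℤ)) * q := by ring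
      have h2 : Ψ (x.1, (x.2 + (-(n : ℤ) - 1) * (q : ℤ)) + (q:ℤ)) =
          Complex.exp ((θ : ℂ) * Complex.I) * Ψ (x.1, x.2 + (-(n : ℤ) - 1) * (q : ℤ)) :=
        hb (x.1, x.2 + (-(n : ℤ) - 1) * (q : ℤ))
      rw [h1, ih x] at h2
      have h3 : Complex.exp ((θ : ℂ) * Complex.I) ≠ 0 := Complex.exp_ne_zero _
      have h4 : Complex.exp ((θ : ℂ) * Complex.I) ^ (-(n : ℤ)) =
          Complex.exp ((θ : ℂ) * Complex.I) * Complex.exp ((θ : ℂ) * Complex.I) ^ (-(n : ℤ) - 1) := by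
        rw [zpow_sub_one₀ h3]
        field_simp
      rw [h4, mul_assoc] at h2
      exact (mul_left_cancel₀ h3 h2).symm

private lemma norm_bloch_eq {Ψ : ℤ × ℤ → ℂ} {θ : ℝ} {q : ℕ}
    (hb : ∀ x : ℤ × ℤ, Ψ (x.1, x.2 + (q : ℤ)) = Complex.exp ((θ : ℂ) * Complex.I) * Ψ x)
    (k : ℤ) (x : ℤ × ℤ) : ‖Ψ (x.1, x.2 + k * (q : ℤ))‖ = ‖Ψ x‖ := by
  rw [bloch_zpow hb k x, norm_mul, norm_zpow]
  have : ‖Complex.exp ((θ : ℂ) * Complex.I)‖ = 1 := by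
    exact Complex.norm_exp_ofReal_mul_I θ
  rw [this]
  simp

private lemma norm_le_sup {Ψ : ℤ × ℤ → ℂ} {θ : ℝ} {q : ℕ} (hq : 1 ≤ q)
    (hb : ∀ x : ℤ × ℤ, Ψ (x.1, x.2 + (q : ℤ)) = Complex.exp ((θ : ℂ) * Complex.I) * Ψ x)
    (x₁ m : ℤ) :
    ‖Ψ (x₁, m)‖ ^ 2 ≤ ⨆ j : Fin q, ‖Ψ (x₁, ((j : ℕ) : ℤ))‖ ^ 2 := by
  have hq0 : (0 : ℤ) < (q : ℤ) := by exact_mod_cast hq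
  have hr0 : 0 ≤ m % (q : ℤ) := Int.emod_nonneg m (by omega)
  have hrq : m % (q : ℤ) < (q : ℤ) := Int.emod_lt_of_pos m hq0
  have hm : m % (q : ℤ) + m / (q : ℤ) * (q : ℤ) = m := by
    rw [mul_comm]; exact Int.emod_add_mul_ediv m q
  have hnorm : ‖Ψ (x₁, m)‖ = ‖Ψ (x₁, m % (q : ℤ))‖ := by
    conv_lhs => rw [← hm]
    exact norm_bloch_eq hb (m / (q : ℤ)) (x₁, m % (q : ℤ))
  have hlt : (m % (q : ℤ)).toNat < q := by omega
  have hcast : (((m % (q : ℤ)).toNat : ℕ) : ℤ) = m % (q : ℤ) := Int.toNat_of_nonneg hr0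
  have hle : ‖Ψ (x₁, m % (q : ℤ))‖ ^ 2 ≤ ⨆ j : Fin q, ‖Ψ (x₁, ((j : ℕ) : ℤ))‖ ^ 2 := by
    have := le_ciSup (f := fun j : Fin q => ‖Ψ (x₁, ((j : ℕ) : ℤ))‖ ^ 2)
      (Set.Finite.bddAbove (Set.finite_range _)) ⟨(m % (q : ℤ)).toNat, hlt⟩
    simpa [hcast] using this
  rw [hnorm]; exact hle

private lemma key_summable {F : Finset ℤ} {S : ℤ → ℝ} (hS : Summable S) (hS0 : ∀ a, 0 ≤ S a)
    {f : ℤ × ℤ → ℝ} (hf0 : ∀ x, 0 ≤ f x)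
    (hle : ∀ x : ℤ × ℤ, f x ≤ if x.2 ∈ F then S x.1 else 0) :
    Summable f ∧ ∑' x, f x ≤ (F.card : ℝ) * ∑' a, S a := by
  set g : ℤ × ℤ → ℝ := fun x => if x.2 ∈ F then S x.1 else 0 with hgdef
  have hgeq : g = fun x => S x.1 * (if x.2 ∈ F then (1 : ℝ) else 0) := by
    funext x; by_cases h : x.2 ∈ F <;> simp [hgdef, h]
  have hind : Summable (fun b : ℤ => if b ∈ F then (1 : ℝ) else 0) :=
    summable_of_ne_finset_zero (s := F) (fun b hb => if_neg hb)
  have hg : Summable g := by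
    rw [hgeq]
    exact Summable.mul_of_nonneg (f := S) (g := fun b : ℤ => if b ∈ F then (1 : ℝ) else 0)
      hS hind hS0 (fun b => by dsimp only; split <;> norm_num)
  have hsf : Summable f := hg.of_nonneg_of_le hf0 hle
  refine ⟨hsf, ?_⟩
  have h1 : ∑' x, f x ≤ ∑' x, g x := Summable.tsum_le_tsum hle hsf hg
  have h2 : ∑' x, g x = ∑' a : ℤ, ∑' b : ℤ, g (a, b) := Summable.tsum_prod' hg hg.prod_factor
  have h3 : ∀ a : ℤ, ∑' b : ℤ, g (a, b) = (F.card : ℝ) * S a := by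
    intro a
    have e1 : ∑' b : ℤ, g (a, b) = ∑ b ∈ F, g (a, b) :=
      tsum_eq_sum (fun b hb => by simp [hgdef, hb])
    have e2 : ∀ b ∈ F, g (a, b) = S a := fun b hb => by simp [hgdef, hb]
    rw [e1, Finset.sum_congr rfl e2, Finset.sum_const, nsmul_eq_mul]
  calc ∑' x, f x ≤ ∑' x, g x := h1
    _ = ∑' a : ℤ, ∑' b : ℤ, g (a, b) := h2
    _ = ∑' a : ℤ, (F.card : ℝ) * S a := by simp_rw [h3]
    _ = (F.card : ℝ) * ∑' a, S a := tsum_mul_left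

private lemma mem_two {ι : Type*} {f : ι → ℂ} (h : Summable fun x => ‖f x‖ ^ 2) :
    Memℓp f 2 := by
  apply memℓp_gen
  have h2 : (2 : ENNReal).toReal = (2 : ℝ) := by norm_num
  rw [h2]
  refine h.congr fun i => ?_
  rw [show ((2:ℝ) = ((2:ℕ) : ℝ)) by norm_num, Real.rpow_natCast]

private lemma norm_sq_eq_tsum {ι : Type*} (f : lp (fun _ : ι => ℂ) 2) :
    ‖f‖ ^ 2 = ∑' i, ‖f i‖ ^ 2 := by
  have h := lp.norm_rpow_eq_tsum (p := 2) (by norm_num) f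
  simp only [ENNReal.toReal_ofNat] at h
  have hc : ∀ y : ℝ, y ^ (2:ℝ) = y ^ (2:ℕ) := fun y => by
    rw [show ((2:ℝ) = ((2:ℕ) : ℝ)) by norm_num, Real.rpow_natCast]
  rw [← hc ‖f‖, h]
  exact tsum_congr fun i => hc _

set_option maxHeartbeats 1600000 in
/-- if there is a nonzero Bloch–Floquet generalized eigenfunction `Ψ`,
`q`-periodic in `x₂` up to a phase, square-summable in `x₁` (uniformly over a period
in `x₂`), solving `HΨ = EΨ` pointwise, then `E` belongs to the spectrum of the
periodic surface Maryland operator `H = H₀ + V`. -/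
theorem bloch_generalized_eigenfunction_energy_in_spectrum
    (g : ℝ) (hg : 0 < g) (p : ℤ) (q : ℕ) (hq : 1 ≤ q)
    (ω : ℝ) (hω : ω ∈ Set.Ico (0:ℝ) 1)
    (hreg : ∀ x₂ n : ℤ, (p : ℝ) / (q : ℝ) * (x₂ : ℝ) + ω ≠ 1/2 + (n : ℝ))
    (H : lp (fun _ : ℤ × ℤ => ℂ) 2 →L[ℂ] lp (fun _ : ℤ × ℤ => ℂ) 2)
    (hH : IsSelfAdjoint H)
    (hact : ∀ (Φ : lp (fun _ : ℤ × ℤ => ℂ) 2) (x : ℤ × ℤ),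
      (H Φ : ∀ _ : ℤ × ℤ, ℂ) x = lap2 (↑Φ) x + (Vper g p q ω x : ℂ) * Φ x)
    (E : ℝ) (Ψ : ℤ × ℤ → ℂ) (hΨ : Ψ ≠ 0)
    (θ : ℝ)
    (hbloch : ∀ x : ℤ × ℤ, Ψ (x.1, x.2 + (q : ℤ)) = Complex.exp ((θ : ℂ) * Complex.I) * Ψ x)
    (hsq : Summable fun x₁ : ℤ => ⨆ m : Fin q, ‖Ψ (x₁, ((m : ℕ) : ℤ))‖ ^ 2)
    (heq : ∀ x : ℤ × ℤ, lap2 Ψ x + (Vper g p q ω x : ℂ) * Ψ x = (E : ℂ) * Ψ x) :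
    (E : ℂ) ∈ spectrum ℂ H := by
  by_contra hspec
  have hU : IsUnit ((algebraMap ℂ (lp (fun _ : ℤ × ℤ => ℂ) 2 →L[ℂ] lp (fun _ : ℤ × ℤ => ℂ) 2))
      (E : ℂ) - H) := spectrum.notMem_iff.mp hspec
  set T : lp (fun _ : ℤ × ℤ => ℂ) 2 →L[ℂ] lp (fun _ : ℤ × ℤ => ℂ) 2 :=
    (algebraMap ℂ _) (E : ℂ) - H with hTdef
  obtain ⟨u, hu⟩ := hU
  set B : lp (fun _ : ℤ × ℤ => ℂ) 2 →L[ℂ] lp (fun _ : ℤ × ℤ => ℂ) 2 := ↑u⁻¹ with hBdef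
  have hBT : ∀ Φ : lp (fun _ : ℤ × ℤ => ℂ) 2, Φ = B (T Φ) := by
    intro Φ
    have h1 : (B * T) Φ = B (T Φ) := rfl
    have h2 : B * T = 1 := by rw [hBdef, ← hu]; exact u.inv_mul
    rw [← h1, h2]; rfl
  have hnormBT : ∀ Φ : lp (fun _ : ℤ × ℤ => ℂ) 2, ‖Φ‖ ≤ ‖B‖ * ‖T Φ‖ := by
    intro Φ
    conv_lhs => rw [hBT Φ]
    exact B.le_opNorm _
  -- pointwise formula for T
  have hT : ∀ (Φ : lp (fun _ : ℤ × ℤ => ℂ) 2) (x : ℤ × ℤ),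
      (T Φ : ∀ _ : ℤ × ℤ, ℂ) x =
        (E : ℂ) * Φ x - (lap2 (↑Φ) x + (Vper g p q ω x : ℂ) * Φ x) := by
    intro Φ x
    have h1 : T Φ = (E : ℂ) • Φ - H Φ := by
      rw [hTdef]
      simp only [ContinuousLinearMap.sub_apply, Algebra.algebraMap_eq_smul_one,
        ContinuousLinearMap.smul_apply, ContinuousLinearMap.one_apply]
    rw [h1]
    have h2 : ((((E : ℂ) • Φ - H Φ) : lp (fun _ : ℤ × ℤ => ℂ) 2) : ∀ _ : ℤ × ℤ, ℂ) x
        = (E : ℂ) * Φ x - (H Φ : ∀ _ : ℤ × ℤ, ℂ) x := by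
      rw [lp.coeFn_sub, Pi.sub_apply, lp.coeFn_smul, Pi.smul_apply, smul_eq_mul]
    rw [h2, hact Φ x]
  -- basic data
  obtain ⟨x₀, hx₀⟩ : ∃ x₀, Ψ x₀ ≠ 0 := by
    by_contra h
    push_neg at h
    exact hΨ (funext fun x => h x)
  set a := x₀.1 with hadef
  set b := x₀.2 with hbdef
  set c : ℝ := ‖Ψ x₀‖ ^ 2 with hcdef
  have hc : 0 < c := by
    have h := norm_pos_iff.mpr hx₀
    exact pow_pos h 2
  set S : ℤ → ℝ := fun x₁ => ⨆ m : Fin q, ‖Ψ (x₁, ((m : ℕ) : ℤ))‖ ^ 2 with hSdef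
  have hS0 : ∀ x₁, 0 ≤ S x₁ := fun x₁ => Real.iSup_nonneg (fun j => by positivity)
  have hNB : ∀ x₁ m : ℤ, ‖Ψ (x₁, m)‖ ^ 2 ≤ S x₁ := fun x₁ m => norm_le_sup hq hbloch x₁ m
  set SS : ℝ := ∑' x₁, S x₁ with hSSdef
  have hSS0 : 0 ≤ SS := tsum_nonneg hS0
  -- main estimate: for every k : ℕ, (k+1) * c ≤ ‖B‖^2 * (4 * SS)
  have main : ∀ k : ℕ, ((k : ℝ) + 1) * c ≤ ‖B‖ ^ 2 * (4 * SS) := by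
    intro k
    obtain ⟨cc, hcc⟩ : ∃ t : ℤ, t = b + (k : ℤ) * (q : ℤ) := ⟨_, rfl⟩
    have hbcc : b ≤ cc := by
      rw [hcc]; nlinarith [Int.ofNat_nonneg k, show (0:ℤ) < (q:ℤ) by exact_mod_cast hq]
    set F : Finset ℤ := Finset.Icc b cc with hFdef
    set χ : ℤ → ℂ := fun m => if m ∈ F then (1 : ℂ) else 0 with hχdef
    set Φf : ℤ × ℤ → ℂ := fun x => χ x.2 * Ψ x with hΦfdef
    have hΦfnorm : ∀ x : ℤ × ℤ, ‖Φf x‖ ^ 2 ≤ if x.2 ∈ F then S x.1 else 0 := by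
      intro x
      by_cases h : x.2 ∈ F
      · simp only [hΦfdef, hχdef, h, if_true, one_mul]
        exact hNB x.1 x.2
      · simp [hΦfdef, hχdef, h]
    have hmem := key_summable hsq hS0 (fun x => by positivity) hΦfnorm
    set Φk : lp (fun _ : ℤ × ℤ => ℂ) 2 := ⟨Φf, mem_two hmem.1⟩ with hΦkdef
    have hΦkcoe : (Φk : ∀ _ : ℤ × ℤ, ℂ) = Φf := rfl
    -- value of T Φk
    have hTval : ∀ x : ℤ × ℤ, (T Φk : ∀ _ : ℤ × ℤ, ℂ) x =
        (1/2 : ℂ) * ((χ (x.2 + 1) - χ x.2) * Ψ (x.1, x.2 + 1)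
          + (χ (x.2 - 1) - χ x.2) * Ψ (x.1, x.2 - 1)) := by
      intro x
      rw [hT Φk x]
      have h0 := heq x
      simp only [lap2] at h0 ⊢
      simp only [hΦkcoe, hΦfdef]
      linear_combination (-(χ x.2)) * h0
    -- bound on ‖T Φk x‖²
    set F4 : Finset ℤ := {b - 1, b, cc, cc + 1} with hF4def
    have hTbound : ∀ x : ℤ × ℤ, ‖(T Φk : ∀ _ : ℤ × ℤ, ℂ) x‖ ^ 2 ≤
        if x.2 ∈ F4 then S x.1 else 0 := by
      intro x
      by_cases h : x.2 ∈ F4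
      · rw [if_pos h]
        have hχle : ∀ m m' : ℤ, ‖χ m - χ m'‖ ≤ 1 := by
          intro m m'
          simp only [hχdef]
          split <;> split <;> simp
        have hb1 : ‖(T Φk : ∀ _ : ℤ × ℤ, ℂ) x‖ ≤
            (1/2 : ℝ) * (‖Ψ (x.1, x.2 + 1)‖ + ‖Ψ (x.1, x.2 - 1)‖) := by
          rw [hTval x]
          calc ‖(1/2 : ℂ) * ((χ (x.2 + 1) - χ x.2) * Ψ (x.1, x.2 + 1)
                + (χ (x.2 - 1) - χ x.2) * Ψ (x.1, x.2 - 1))‖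
              ≤ (1/2 : ℝ) * (‖(χ (x.2 + 1) - χ x.2) * Ψ (x.1, x.2 + 1)‖
                + ‖(χ (x.2 - 1) - χ x.2) * Ψ (x.1, x.2 - 1)‖) := by
                rw [norm_mul]
                gcongr
                · norm_num
                · exact norm_add_le _ _
            _ ≤ (1/2 : ℝ) * (‖Ψ (x.1, x.2 + 1)‖ + ‖Ψ (x.1, x.2 - 1)‖) := by
                gcongr
                · calc ‖(χ (x.2 + 1) - χ x.2) * Ψ (x.1, x.2 + 1)‖
                      = ‖χ (x.2 + 1) - χ x.2‖ * ‖Ψ (x.1, x.2 + 1)‖ := norm_mul _ _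
                    _ ≤ 1 * ‖Ψ (x.1, x.2 + 1)‖ := by
                        gcongr; exact hχle _ _
                    _ = ‖Ψ (x.1, x.2 + 1)‖ := one_mul _
                · calc ‖(χ (x.2 - 1) - χ x.2) * Ψ (x.1, x.2 - 1)‖
                      = ‖χ (x.2 - 1) - χ x.2‖ * ‖Ψ (x.1, x.2 - 1)‖ := norm_mul _ _
                    _ ≤ 1 * ‖Ψ (x.1, x.2 - 1)‖ := by
                        gcongr; exact hχle _ _
                    _ = ‖Ψ (x.1, x.2 - 1)‖ := one_mul _
        have hu := hNB x.1 (x.2 + 1)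
        have hv := hNB x.1 (x.2 - 1)
        have hn0 : (0:ℝ) ≤ ‖(T Φk : ∀ _ : ℤ × ℤ, ℂ) x‖ := norm_nonneg _
        nlinarith [norm_nonneg (Ψ (x.1, x.2 + 1)), norm_nonneg (Ψ (x.1, x.2 - 1)),
          sq_nonneg (‖Ψ (x.1, x.2 + 1)‖ - ‖Ψ (x.1, x.2 - 1)‖)]
      · rw [if_neg h]
        have hx2 : x.2 ≠ b - 1 ∧ x.2 ≠ b ∧ x.2 ≠ cc ∧ x.2 ≠ cc + 1 := by
          simp only [hF4def, Finset.mem_insert, Finset.mem_singleton] at h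
          push_neg at h
          exact h
        have hχ1 : χ (x.2 + 1) = χ x.2 := by
          simp only [hχdef, hFdef, Finset.mem_Icc]
          have : (b ≤ x.2 + 1 ∧ x.2 + 1 ≤ cc) ↔ (b ≤ x.2 ∧ x.2 ≤ cc) := by omega
          rw [if_congr this rfl rfl]
        have hχ2 : χ (x.2 - 1) = χ x.2 := by
          simp only [hχdef, hFdef, Finset.mem_Icc]
          have : (b ≤ x.2 - 1 ∧ x.2 - 1 ≤ cc) ↔ (b ≤ x.2 ∧ x.2 ≤ cc) := by omega
          rw [if_congr this rfl rfl]
        rw [hTval x, hχ1, hχ2]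
        simp
    have hTmem := key_summable hsq hS0 (fun x => by positivity) hTbound
    have hF4card : (F4.card : ℝ) ≤ 4 := by
      have h1 : F4.card ≤ 4 := by
        rw [hF4def]
        apply le_trans (Finset.card_insert_le _ _)
        have h2 : ({b, cc, cc + 1} : Finset ℤ).card ≤ 3 := by
          apply le_trans (Finset.card_insert_le _ _)
          have h3 : ({cc, cc + 1} : Finset ℤ).card ≤ 2 := by
            apply le_trans (Finset.card_insert_le _ _)
            simp
          omega
        omega
      exact_mod_cast h1
    have hTn : ‖T Φk‖ ^ 2 ≤ 4 * SS := by
      rw [norm_sq_eq_tsum (T Φk)]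
      calc ∑' x : ℤ × ℤ, ‖(T Φk : ∀ _ : ℤ × ℤ, ℂ) x‖ ^ 2
          ≤ (F4.card : ℝ) * SS := hTmem.2
        _ ≤ 4 * SS := by gcongr
    -- lower bound on ‖Φk‖²
    have hqpos : (0:ℤ) < (q:ℤ) := by exact_mod_cast hq
    set s : Finset (ℤ × ℤ) := (Finset.range (k+1)).image (fun j : ℕ => (a, b + (j : ℤ) * (q : ℤ))) with hsdef
    have hqne : (q : ℤ) ≠ 0 := by exact_mod_cast (by omega : (q:ℕ) ≠ 0)
    have hinj : Set.InjOn (fun j : ℕ => ((a, b + (j : ℤ) * (q : ℤ)) : ℤ × ℤ))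
        ↑(Finset.range (k+1)) := by
      intro j _ j' _ hjj
      have h2 : b + (j : ℤ) * (q : ℤ) = b + (j' : ℤ) * (q : ℤ) := congrArg Prod.snd hjj
      have h4 : (j : ℤ) * (q : ℤ) = (j' : ℤ) * (q : ℤ) := by linarith
      have h3 : (j : ℤ) = (j' : ℤ) := mul_right_cancel₀ hqne h4
      exact_mod_cast h3
    have hcard : s.card = k + 1 := by
      rw [hsdef, Finset.card_image_of_injOn hinj, Finset.card_range]
    have hval : ∀ x ∈ s, ‖Φf x‖ ^ 2 = c := by
      intro x hx
      rw [hsdef] at hx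
      simp only [Finset.mem_image, Finset.mem_range] at hx
      obtain ⟨j, hj, rfl⟩ := hx
      have hmemF : b + (j : ℤ) * q ∈ F := by
        rw [hFdef, Finset.mem_Icc]
        constructor
        · nlinarith [Int.ofNat_nonneg j, hqpos]
        · rw [hcc]
          have : (j : ℤ) ≤ (k : ℤ) := by exact_mod_cast Nat.lt_succ_iff.mp hj
          nlinarith
      have h1 : Φf (a, b + (j : ℤ) * q) = Ψ (a, b + (j : ℤ) * q) := by
        simp [hΦfdef, hχdef, hmemF]
      rw [h1]
      have h2 : ‖Ψ (a, b + (j : ℤ) * q)‖ = ‖Ψ (a, b)‖ :=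
        norm_bloch_eq hbloch (j : ℤ) (a, b)
      rw [hcdef, h2]
    have hlow : ((k : ℝ) + 1) * c ≤ ‖Φk‖ ^ 2 := by
      rw [norm_sq_eq_tsum Φk]
      have h1 : ∑ x ∈ s, ‖Φf x‖ ^ 2 ≤ ∑' x : ℤ × ℤ, ‖Φf x‖ ^ 2 :=
        Summable.sum_le_tsum s (fun x _ => by positivity) hmem.1
      have h2 : ∑ x ∈ s, ‖Φf x‖ ^ 2 = ((k : ℝ) + 1) * c := by
        rw [Finset.sum_congr rfl hval, Finset.sum_const, hcard, nsmul_eq_mul]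
        push_cast
        ring
      have h3 : (fun x : ℤ × ℤ => ‖(Φk : ∀ _ : ℤ × ℤ, ℂ) x‖ ^ 2) = fun x => ‖Φf x‖ ^ 2 := by
        rw [hΦkcoe]
      calc ((k : ℝ) + 1) * c = ∑ x ∈ s, ‖Φf x‖ ^ 2 := h2.symm
        _ ≤ ∑' x : ℤ × ℤ, ‖Φf x‖ ^ 2 := h1
        _ = ∑' x : ℤ × ℤ, ‖(Φk : ∀ _ : ℤ × ℤ, ℂ) x‖ ^ 2 := by rw [h3]
    -- combine
    have hup : ‖Φk‖ ^ 2 ≤ ‖B‖ ^ 2 * ‖T Φk‖ ^ 2 := by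
      have := hnormBT Φk
      have h1 : ‖Φk‖ ^ 2 ≤ (‖B‖ * ‖T Φk‖) ^ 2 := by
        apply pow_le_pow_left₀ (norm_nonneg _) this
      rw [mul_pow] at h1
      exact h1
    calc ((k : ℝ) + 1) * c ≤ ‖Φk‖ ^ 2 := hlow
      _ ≤ ‖B‖ ^ 2 * ‖T Φk‖ ^ 2 := hup
      _ ≤ ‖B‖ ^ 2 * (4 * SS) := by
          apply mul_le_mul_of_nonneg_left hTn (by positivity)
  -- contradiction
  obtain ⟨k, hk⟩ := exists_nat_gt (‖B‖ ^ 2 * (4 * SS) / c)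
  have h1 := main k
  have h2 : ‖B‖ ^ 2 * (4 * SS) < (k : ℝ) * c := by
    rw [div_lt_iff₀ hc] at hk
    linarith
  nlinarith
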